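/- Let F : ℝⁿ × ℝᵐ → ℝ be continuously differentiable with nonempty saddle set Saddle(F). Assume (i) F is globally convex-concave and F(x,·) is linear (affine) in z for each fixed x, and (ii) for each (x*,z*) ∈ Saddle(F), whenever F(x,z*) = F(x*,z*) for some x ∈ ℝⁿ, the point (x,z*) belongs to Saddle(F). Then Saddle(F) is globally asymptotically stable under the saddle-point dynamics ẋ = -∇ₓF(x,z), ż = ∇_zF(x,z), and every trajectory converges to a single point of Saddle(F). -/

import Mathlib

open Metric Filter Topology Set

noncomputable section

/-- Euclidean space `ℝⁿ`. -/
abbrev En (n : ℕ) : Type := EuclideanSpace ℝ (Fin n)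

variable {n m : ℕ}

/-- Partial gradient of `F` in the first (x) variable. -/
def gradX (F : En n × En m → ℝ) (p : En n × En m) : En n :=
  gradient (fun x => F (x, p.2)) p.1

/-- Partial gradient of `F` in the second (z) variable. -/
def gradZ (F : En n × En m → ℝ) (p : En n × En m) : En m :=
  gradient (fun z => F (p.1, z)) p.2

/-- The saddle-point vector field `X_sp = (-∇ₓF, ∇_zF)`. -/
def Xsp (F : En n × En m → ℝ) (p : En n × En m) : En n × En m :=
  (-gradX F p, gradZ F p)

/-- A trajectory of the saddle-point dynamics, defined on `[0,∞)`. -/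
def IsTrajectory (F : En n × En m → ℝ) (φ : ℝ → En n × En m) : Prop :=
  ∀ t : ℝ, 0 ≤ t → HasDerivAt φ (Xsp F (φ t)) t

/-- `p` is a (local min-max) saddle point of `F`. -/
def IsSaddlePoint (F : En n × En m → ℝ) (p : En n × En m) : Prop :=
  ∃ U : Set (En n), ∃ W : Set (En m),
    IsOpen U ∧ IsOpen W ∧ p.1 ∈ U ∧ p.2 ∈ W ∧
    ∀ x ∈ U, ∀ z ∈ W, F (p.1, z) ≤ F p ∧ F p ≤ F (x, p.2)

/-- The set of saddle points of `F`. -/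
def SaddleSet (F : En n × En m → ℝ) : Set (En n × En m) :=
  {p | IsSaddlePoint F p}

/-- A point `p` is stable for the saddle-point dynamics of `F`. -/
def StablePt (F : En n × En m → ℝ) (p : En n × En m) : Prop :=
  ∀ ε > 0, ∃ δ > 0, ∀ φ : ℝ → En n × En m, IsTrajectory F φ →
    dist (φ 0) p < δ → ∀ t : ℝ, 0 ≤ t → dist (φ t) p < ε

/-- `S` is an isolated path connected component of `T`. -/
def IsIsolatedPathComponent (S T : Set (En n × En m)) : Prop :=
  S ⊆ T ∧ (∀ a ∈ S, ∀ b ∈ S, JoinedIn S a b) ∧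
    ∃ U : Set (En n × En m), IsOpen U ∧ S ⊆ U ∧ U ∩ T = S

/-- `F` is locally convex-concave at `p`. -/
def LocallyConvexConcaveAt (F : En n × En m → ℝ) (p : En n × En m) : Prop :=
  ∃ U : Set (En n × En m), IsOpen U ∧ p ∈ U ∧
    ∀ q ∈ U, ConvexOn ℝ {x : En n | (x, q.2) ∈ U} (fun x => F (x, q.2)) ∧
      ConcaveOn ℝ {z : En m | (q.1, z) ∈ U} (fun z => F (q.1, z))

/-- `F` is locally strictly convex-concave at `p`. -/
def LocallyStrictlyConvexConcaveAt (F : En n × En m → ℝ) (p : En n × En m) : Prop :=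
  LocallyConvexConcaveAt F p ∧
    ((∃ r > 0, StrictConvexOn ℝ (ball p.1 r) (fun x => F (x, p.2))) ∨
      (∃ r > 0, StrictConcaveOn ℝ (ball p.2 r) (fun z => F (p.1, z))))

set_option maxHeartbeats 1000000

-- slice differentiability
lemma sliceX_hasGradient (F : En n × En m → ℝ) (hF : ContDiff ℝ 1 F) (p : En n × En m) :
    HasGradientAt (fun x => F (x, p.2)) (gradX F p) p.1 := by
  have hd : DifferentiableAt ℝ (fun x : En n => F (x, p.2)) p.1 := by
    exact (hF.differentiable one_ne_zero).differentiableAt.comp p.1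
      ((differentiableAt_id.prodMk (differentiableAt_const _)))
  exact hd.hasGradientAt

lemma sliceX_hasDerivAlong (F : En n × En m → ℝ) (hF : ContDiff ℝ 1 F)
    {x : ℝ → En n} {x' : En n} {t : ℝ} (hx : HasDerivAt x x' t) (z : En m) :
    HasDerivAt (fun s => F (x s, z))
      (inner ℝ (gradX F (x t, z)) x' : ℝ) t := by
  have h1 := sliceX_hasGradient F hF (x t, z)
  have := h1.hasFDerivAt.comp_hasDerivAt t hx
  simpa [InnerProductSpace.toDual_apply_apply, Function.comp_def] using this

section Affine
variable {F : En n × En m → ℝ}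
  (hlin : ∀ x : En n, ∃ (L : En m →L[ℝ] ℝ) (c : ℝ), ∀ z : En m, F (x, z) = L z + c)

include hlin

lemma sliceZ_hasGradient (p : En n × En m) :
    HasGradientAt (fun z => F (p.1, z)) (gradZ F p) p.2 := by
  obtain ⟨L, c, hLc⟩ := hlin p.1
  have hd : DifferentiableAt ℝ (fun z : En m => F (p.1, z)) p.2 := by
    have : (fun z : En m => F (p.1, z)) = fun z => L z + c := funext hLc
    rw [this]
    exact (L.differentiableAt).add_const c
  exact hd.hasGradientAt

/-- The z-gradient does not depend on the z-coordinate. -/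
lemma gradZ_indep (x : En n) (z z' : En m) :
    gradZ F (x, z) = gradZ F (x, z') := by
  obtain ⟨L, c, hLc⟩ := hlin x
  have key : ∀ w : En m, gradZ F (x, w) = (InnerProductSpace.toDual ℝ (En m)).symm L := by
    intro w
    have : HasGradientAt (fun z => F (x, z))
        ((InnerProductSpace.toDual ℝ (En m)).symm L) w := by
      have h2 : HasFDerivAt (fun z : En m => F (x, z)) L w := by
        have : (fun z : En m => F (x, z)) = fun z => L z + c := funext hLc
        rw [this]; exact L.hasFDerivAt.add_const c
      exact h2.hasGradientAt
    exact this.gradient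
  rw [key z, key z']

/-- Affine identity : F(x,z') = F(x,z) + ⟪gradZ, z' - z⟫. -/
lemma affineZ (p : En n × En m) (z' : En m) :
    F (p.1, z') = F p + (inner ℝ (gradZ F p) (z' - p.2) : ℝ) := by
  obtain ⟨L, c, hLc⟩ := hlin p.1
  have hg : gradZ F p = (InnerProductSpace.toDual ℝ (En m)).symm L := by
    have h2 : HasFDerivAt (fun z : En m => F (p.1, z)) L p.2 := by
      have : (fun z : En m => F (p.1, z)) = fun z => L z + c := funext hLc
      rw [this]; exact L.hasFDerivAt.add_const c
    exact h2.hasGradientAt.gradient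
  rw [hg, InnerProductSpace.toDual_symm_apply, hLc, map_sub]
  have : F p = F (p.1, p.2) := by rw [Prod.mk.eta]
  rw [this, hLc]; ring

lemma sliceZ_hasDerivAlong (hF : ContDiff ℝ 1 F)
    {φ : ℝ → En n × En m} {φ' : En n × En m} {t : ℝ} (hφ : HasDerivAt φ φ' t) :
    HasDerivAt (fun s => ((φ s).2 : En m)) φ'.2 t :=
  (ContinuousLinearMap.snd ℝ (En n) (En m)).hasFDerivAt.comp_hasDerivAt t hφ

end Affine

section Cont
variable {F : En n × En m → ℝ} (hF : ContDiff ℝ 1 F)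
include hF

lemma gradX_eq (p : En n × En m) :
    gradX F p = (InnerProductSpace.toDual ℝ (En n)).symm
      ((fderiv ℝ F p).comp ((ContinuousLinearMap.id ℝ (En n)).prod 0)) := by
  have hslice : HasFDerivAt (fun x : En n => F (x, p.2))
      ((fderiv ℝ F p).comp ((ContinuousLinearMap.id ℝ (En n)).prod 0)) p.1 := by
    have hFd : HasFDerivAt F (fderiv ℝ F p) p := by
      exact ((hF.differentiable one_ne_zero).differentiableAt).hasFDerivAt
    have hinc : HasFDerivAt (fun x : En n => ((x, p.2) : En n × En m))
        ((ContinuousLinearMap.id ℝ (En n)).prod 0) p.1 :=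
      (hasFDerivAt_id p.1).prodMk (hasFDerivAt_const p.2 p.1)
    have := hFd.comp p.1 (by simpa using hinc)
    simpa [Function.comp_def] using this
  exact hslice.hasGradientAt.gradient

lemma gradX_continuous : Continuous (fun p => gradX F p) := by
  have : (fun p => gradX F p) = fun p => (InnerProductSpace.toDual ℝ (En n)).symm
      ((fderiv ℝ F p).comp ((ContinuousLinearMap.id ℝ (En n)).prod 0)) :=
    funext (gradX_eq hF)
  rw [this]
  exact (InnerProductSpace.toDual ℝ (En n)).symm.continuous.comp
    ((hF.continuous_fderiv one_ne_zero).clm_comp continuous_const)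

lemma gradZ_eq (p : En n × En m) :
    gradZ F p = (InnerProductSpace.toDual ℝ (En m)).symm
      ((fderiv ℝ F p).comp ((0 : En m →L[ℝ] En n).prod (ContinuousLinearMap.id ℝ (En m)))) := by
  have hslice : HasFDerivAt (fun z : En m => F (p.1, z))
      ((fderiv ℝ F p).comp ((0 : En m →L[ℝ] En n).prod (ContinuousLinearMap.id ℝ (En m)))) p.2 := by
    have hFd : HasFDerivAt F (fderiv ℝ F p) p :=
      ((hF.differentiable one_ne_zero).differentiableAt).hasFDerivAt
    have hinc : HasFDerivAt (fun z : En m => ((p.1, z) : En n × En m))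
        ((0 : En m →L[ℝ] En n).prod (ContinuousLinearMap.id ℝ (En m))) p.2 :=
      (hasFDerivAt_const p.1 p.2).prodMk (hasFDerivAt_id p.2)
    have := hFd.comp p.2 (by simpa using hinc)
    simpa [Function.comp_def] using this
  exact hslice.hasGradientAt.gradient

lemma gradZ_continuous : Continuous (fun p => gradZ F p) := by
  have : (fun p => gradZ F p) = fun p => (InnerProductSpace.toDual ℝ (En m)).symm
      ((fderiv ℝ F p).comp ((0 : En m →L[ℝ] En n).prod (ContinuousLinearMap.id ℝ (En m)))) :=
    funext (gradZ_eq hF)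
  rw [this]
  exact (InnerProductSpace.toDual ℝ (En m)).symm.continuous.comp
    ((hF.continuous_fderiv one_ne_zero).clm_comp continuous_const)

end Cont

/-- Gradient inequality for a convex differentiable function. -/
lemma convex_gradient_ineq {k : ℕ} {f : En k → ℝ} (hconv : ConvexOn ℝ univ f)
    {g x : En k} (hg : HasGradientAt f g x) (y : En k) :
    f x + (inner ℝ g (y - x) : ℝ) ≤ f y := by
  set d : ℝ := (inner ℝ g (y - x) : ℝ) with hd
  -- the curve t ↦ x + t • (y - x)
  have hcurve : ∀ t : ℝ, HasDerivAt (fun t : ℝ => x + t • (y - x)) (y - x) t := by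
    intro t
    simpa using ((hasDerivAt_id t).smul_const (y - x)).const_add x
  have hq : HasDerivAt (fun t : ℝ => f (x + t • (y - x))) d 0 := by
    have hx0 : x + (0:ℝ) • (y - x) = x := by simp
    have hgx : HasFDerivAt f ((InnerProductSpace.toDual ℝ (En k)) g) (x + (0:ℝ) • (y - x)) := by
      rw [hx0]; exact hg.hasFDerivAt
    have := hgx.comp_hasDerivAt 0 (hcurve 0)
    simpa [InnerProductSpace.toDual_apply_apply, hd, Function.comp_def] using this
  have hslope : Tendsto (slope (fun t : ℝ => f (x + t • (y - x))) 0) (𝓝[>] 0) (𝓝 d) :=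
    (hasDerivAt_iff_tendsto_slope.1 hq).mono_left
      (nhdsWithin_mono 0 (fun t ht => ne_of_gt ht))
  have hbound : ∀ᶠ t in 𝓝[>] (0 : ℝ),
      slope (fun t : ℝ => f (x + t • (y - x))) 0 t ≤ f y - f x := by
    filter_upwards [Ioc_mem_nhdsGT_of_mem (by norm_num : (0:ℝ) ∈ Ico (0:ℝ) 1)] with t ht
    have ht0 : 0 < t := ht.1
    have ht1 : t ≤ 1 := ht.2
    have hcvx := hconv.2 (mem_univ x) (mem_univ y) (by linarith : (0:ℝ) ≤ 1 - t)
      (le_of_lt ht0) (by ring)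
    have hpt : x + t • (y - x) = (1 - t) • x + t • y := by
      rw [smul_sub, sub_smul]; module
    have : f (x + t • (y - x)) ≤ (1 - t) * f x + t * f y := by rw [hpt]; exact hcvx
    have hfle : f (x + t • (y - x)) ≤ (1 - t) * f x + t * f y := by
      rw [hpt]; simpa [smul_eq_mul] using hcvx
    rw [slope_def_field]
    rw [sub_zero, zero_smul, add_zero, div_le_iff₀ ht0]
    nlinarith
  have := le_of_tendsto hslope hbound
  linarith

section Saddle
variable {F : En n × En m → ℝ}
  (hlin : ∀ x : En n, ∃ (L : En m →L[ℝ] ℝ) (c : ℝ), ∀ z : En m, F (x, z) = L z + c)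

include hlin in
/-- At a saddle point the z-gradient vanishes. -/
lemma saddle_gradZ_zero {p : En n × En m} (hp : IsSaddlePoint F p) :
    gradZ F p = 0 := by
  obtain ⟨U, W, hU, hW, hpU, hpW, hsad⟩ := hp
  by_contra hne
  set g := gradZ F p with hg
  have hgpos : 0 < ‖g‖ := norm_pos_iff.2 hne
  obtain ⟨r, hr, hball⟩ := Metric.isOpen_iff.1 hW p.2 hpW
  set t : ℝ := r / (2 * ‖g‖) with ht
  have htpos : 0 < t := by positivity
  have hmem : p.2 + t • g ∈ W := by
    apply hball
    rw [mem_ball_iff_norm]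
    have : ‖p.2 + t • g - p.2‖ = t * ‖g‖ := by
      rw [add_sub_cancel_left, norm_smul, Real.norm_of_nonneg htpos.le]
    rw [this, ht]
    rw [div_mul_eq_mul_div, mul_comm]
    rw [div_lt_iff₀ (by positivity)]
    nlinarith
  have hle := (hsad p.1 hpU (p.2 + t • g) hmem).1
  have hid := affineZ hlin p (p.2 + t • g)
  rw [add_sub_cancel_left] at hid
  rw [hid] at hle
  have hinner : (inner ℝ g (t • g) : ℝ) = t * ‖g‖ ^ 2 := by
    rw [real_inner_smul_right, real_inner_self_eq_norm_sq]
  rw [← hg] at hle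
  rw [hinner] at hle
  nlinarith [mul_pos htpos (pow_pos hgpos 2)]

include hlin in
/-- At a saddle point, F(p.1, ·) is constant. -/
lemma saddle_z_const {p : En n × En m} (hp : IsSaddlePoint F p) (z : En m) :
    F (p.1, z) = F p := by
  have := affineZ hlin p z
  rw [saddle_gradZ_zero hlin hp] at this
  simpa using this

/-- At a saddle point, p.1 is a global minimizer of F(·, p.2). -/
lemma saddle_global_min
    (hcc : ∀ q : En n × En m, ConvexOn ℝ univ (fun x => F (x, q.2)) ∧
      ConcaveOn ℝ univ (fun z => F (q.1, z)))
    {p : En n × En m} (hp : IsSaddlePoint F p) (x : En n) :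
    F p ≤ F (x, p.2) := by
  obtain ⟨U, W, hU, hW, hpU, hpW, hsad⟩ := hp
  obtain ⟨r, hr, hball⟩ := Metric.isOpen_iff.1 hU p.1 hpU
  rcases eq_or_ne x p.1 with hx | hx
  · rw [hx, Prod.mk.eta]
  have hgpos : 0 < ‖x - p.1‖ := by
    rw [norm_pos_iff, sub_ne_zero]; exact hx
  set t : ℝ := min (r / (2 * ‖x - p.1‖)) 1 with htdef
  have htpos : 0 < t := lt_min (by positivity) one_pos
  have ht1 : t ≤ 1 := min_le_right _ _
  have hmem : p.1 + t • (x - p.1) ∈ U := by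
    apply hball
    rw [mem_ball_iff_norm, add_sub_cancel_left, norm_smul, Real.norm_of_nonneg htpos.le]
    calc t * ‖x - p.1‖ ≤ (r / (2 * ‖x - p.1‖)) * ‖x - p.1‖ := by
          apply mul_le_mul_of_nonneg_right (min_le_left _ _) (norm_nonneg _)
      _ = r / 2 := by field_simp
      _ < r := by linarith
  have hle := (hsad _ hmem p.2 hpW).2
  have hcvx := (hcc p).1.2 (mem_univ p.1) (mem_univ x)
    (by linarith : (0:ℝ) ≤ 1 - t) htpos.le (by ring)
  have hpt : p.1 + t • (x - p.1) = (1 - t) • p.1 + t • x := by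
    rw [smul_sub, sub_smul]; module
  rw [hpt] at hle
  have : F p ≤ (1 - t) * F (p.1, p.2) + t * F (x, p.2) := by
    calc F p ≤ F ((1 - t) • p.1 + t • x, p.2) := hle
      _ ≤ (1 - t) * F (p.1, p.2) + t * F (x, p.2) := by simpa [smul_eq_mul] using hcvx
  have hFp : F (p.1, p.2) = F p := by rw [Prod.mk.eta]
  rw [hFp] at this
  nlinarith

include hlin in
/-- A critical point of convex-concave (affine) F is a saddle point. -/
lemma critical_is_saddle
    (hcc : ∀ q : En n × En m, ConvexOn ℝ univ (fun x => F (x, q.2)) ∧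
      ConcaveOn ℝ univ (fun z => F (q.1, z)))
    (hF : ContDiff ℝ 1 F)
    {p : En n × En m} (hX : gradX F p = 0) (hZ : gradZ F p = 0) :
    IsSaddlePoint F p := by
  refine ⟨univ, univ, isOpen_univ, isOpen_univ, mem_univ _, mem_univ _, ?_⟩
  intro x _ z _
  constructor
  · have := affineZ hlin p z
    rw [hZ] at this; simp at this; rw [this]
  · have := convex_gradient_ineq (hcc p).1 (sliceX_hasGradient F hF p) x
    rw [hX] at this
    simp only [inner_zero_left, add_zero] at this
    calc F p = F (p.1, p.2) := by rw [Prod.mk.eta]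
      _ ≤ F (x, p.2) := this

end Saddle

/-- Squared Euclidean distance on the product. -/
def sqd (p q : En n × En m) : ℝ := ‖p.1 - q.1‖ ^ 2 + ‖p.2 - q.2‖ ^ 2

lemma dist_sq_le_sqd (p q : En n × En m) : dist p q ^ 2 ≤ sqd p q := by
  rw [Prod.dist_eq, sqd]
  rcases max_cases (dist p.1 q.1) (dist p.2 q.2) with ⟨h1, _⟩ | ⟨h1, _⟩ <;>
    rw [h1] <;> rw [dist_eq_norm] <;> nlinarith [norm_nonneg (p.1 - q.1), norm_nonneg (p.2 - q.2)]

lemma sqd_le_two_dist_sq (p q : En n × En m) : sqd p q ≤ 2 * dist p q ^ 2 := by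
  rw [Prod.dist_eq, sqd]
  have h1 : dist p.1 q.1 ≤ max (dist p.1 q.1) (dist p.2 q.2) := le_max_left _ _
  have h2 : dist p.2 q.2 ≤ max (dist p.1 q.1) (dist p.2 q.2) := le_max_right _ _
  simp only [dist_eq_norm] at h1 h2 ⊢
  nlinarith [norm_nonneg (p.1 - q.1), norm_nonneg (p.2 - q.2), dist_nonneg (x := p.1) (y := q.1),
    dist_nonneg (x := p.2) (y := q.2)]

lemma sqd_nonneg (p q : En n × En m) : 0 ≤ sqd p q := by
  have := dist_sq_le_sqd p q
  nlinarith [dist_nonneg (x := p) (y := q)]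

section Traj
variable {F : En n × En m → ℝ} (hF : ContDiff ℝ 1 F)
  (hlin : ∀ x : En n, ∃ (L : En m →L[ℝ] ℝ) (c : ℝ), ∀ z : En m, F (x, z) = L z + c)
  (hcc : ∀ q : En n × En m, ConvexOn ℝ univ (fun x => F (x, q.2)) ∧
      ConcaveOn ℝ univ (fun z => F (q.1, z)))
  {φ : ℝ → En n × En m} (hφ : IsTrajectory F φ)

/-- The inner-product pairing of the vector field with the displacement. -/
def pairV (F : En n × En m → ℝ) (q : En n × En m) (p : En n × En m) : ℝ :=
  2 * ((inner ℝ (-gradX F p) (p.1 - q.1) : ℝ) + (inner ℝ (gradZ F p) (p.2 - q.2) : ℝ))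

include hφ in
lemma traj_x_hasDerivAt {t : ℝ} (ht : 0 ≤ t) :
    HasDerivAt (fun s => (φ s).1) (-gradX F (φ t)) t :=
  (ContinuousLinearMap.fst ℝ (En n) (En m)).hasFDerivAt.comp_hasDerivAt t (hφ t ht)

include hφ in
lemma traj_z_hasDerivAt {t : ℝ} (ht : 0 ≤ t) :
    HasDerivAt (fun s => (φ s).2) (gradZ F (φ t)) t :=
  (ContinuousLinearMap.snd ℝ (En n) (En m)).hasFDerivAt.comp_hasDerivAt t (hφ t ht)

include hφ in
lemma Vfun_hasDerivAt (q : En n × En m) {t : ℝ} (ht : 0 ≤ t) :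
    HasDerivAt (fun s => sqd (φ s) q) (pairV F q (φ t)) t := by
  have hx : HasDerivAt (fun s => (φ s).1 - q.1) (-gradX F (φ t)) t :=
    (traj_x_hasDerivAt hφ ht).sub_const q.1
  have hz : HasDerivAt (fun s => (φ s).2 - q.2) (gradZ F (φ t)) t :=
    (traj_z_hasDerivAt hφ ht).sub_const q.2
  have h1 := HasDerivAt.inner ℝ hx hx
  have h2 := HasDerivAt.inner ℝ hz hz
  have hsum := h1.add h2
  have heq : ∀ s, (inner ℝ ((φ s).1 - q.1) ((φ s).1 - q.1) : ℝ)
      + (inner ℝ ((φ s).2 - q.2) ((φ s).2 - q.2) : ℝ) = sqd (φ s) q := by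
    intro s; rw [sqd, real_inner_self_eq_norm_sq, real_inner_self_eq_norm_sq]
  have hval : (inner ℝ ((φ t).1 - q.1) (-gradX F (φ t)) : ℝ) + inner ℝ (-gradX F (φ t)) ((φ t).1 - q.1)
      + ((inner ℝ ((φ t).2 - q.2) (gradZ F (φ t)) : ℝ) + inner ℝ (gradZ F (φ t)) ((φ t).2 - q.2))
      = pairV F q (φ t) := by
    rw [pairV, real_inner_comm ((φ t).1 - q.1), real_inner_comm ((φ t).2 - q.2)]; ring
  rw [hval] at hsum
  have hfun : (fun s => (inner ℝ ((φ s).1 - q.1) ((φ s).1 - q.1) : ℝ)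
      + (inner ℝ ((φ s).2 - q.2) ((φ s).2 - q.2) : ℝ)) = fun s => sqd (φ s) q := funext heq
  simp only [Pi.add_def] at hsum
  rw [hfun] at hsum
  exact hsum

include hF hlin hcc in
/-- Key dissipation inequality at a saddle point q. -/
lemma key_ineq {q : En n × En m} (hq : IsSaddlePoint F q) (p : En n × En m) :
    pairV F q p ≤ -2 * (F (p.1, q.2) - F q) := by
  have hconv : F p + (inner ℝ (gradX F p) (q.1 - p.1) : ℝ) ≤ F (q.1, p.2) := by
    have := convex_gradient_ineq (hcc p).1 (sliceX_hasGradient F hF p) q.1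
    have hFp : F (p.1, p.2) = F p := by rw [Prod.mk.eta]
    simpa [hFp] using this
  have haff : F (p.1, q.2) = F p + (inner ℝ (gradZ F p) (q.2 - p.2) : ℝ) := affineZ hlin p q.2
  have hconst : F (q.1, p.2) = F q := saddle_z_const hlin hq p.2
  have hmin : F q ≤ F (p.1, q.2) := saddle_global_min hcc hq p.1
  have e1 : (inner ℝ (-gradX F p) (p.1 - q.1) : ℝ) = (inner ℝ (gradX F p) (q.1 - p.1) : ℝ) := by
    rw [inner_neg_left, ← inner_neg_right]; congr 1; abel
  have e2 : (inner ℝ (gradZ F p) (p.2 - q.2) : ℝ) = -(inner ℝ (gradZ F p) (q.2 - p.2) : ℝ) := by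
    rw [← inner_neg_right]; congr 1; abel
  rw [pairV, e1, e2]
  nlinarith [hconv, haff, hconst, hmin]

include hφ in
lemma traj_continuousOn {s t : ℝ} (hs : 0 ≤ s) : ContinuousOn φ (Icc s t) := fun τ hτ =>
  ((hφ τ (le_trans hs hτ.1)).continuousAt).continuousWithinAt

include hF in
lemma Xsp_continuous : Continuous (fun p => Xsp F p) :=
  ((gradX_continuous hF).neg).prodMk (gradZ_continuous hF)

include hF hφ in
lemma pairV_continuousOn (q : En n × En m) {s t : ℝ} (hs : 0 ≤ s) :
    ContinuousOn (fun τ => pairV F q (φ τ)) (Icc s t) := by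
  have hcφ := traj_continuousOn hφ (t := t) hs
  have hgx : ContinuousOn (fun τ => gradX F (φ τ)) (Icc s t) :=
    (gradX_continuous hF).comp_continuousOn hcφ
  have hgz : ContinuousOn (fun τ => gradZ F (φ τ)) (Icc s t) :=
    (gradZ_continuous hF).comp_continuousOn hcφ
  have h1 : ContinuousOn (fun τ => (φ τ).1) (Icc s t) := (continuous_fst).comp_continuousOn hcφ
  have h2 : ContinuousOn (fun τ => (φ τ).2) (Icc s t) := (continuous_snd).comp_continuousOn hcφ
  apply ContinuousOn.mul continuousOn_const
  exact ((hgx.neg).inner (h1.sub continuousOn_const)).add (hgz.inner (h2.sub continuousOn_const))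

include hF hφ in
/-- FTC for the Lyapunov function. -/
lemma Vfun_diff (q : En n × En m) {s t : ℝ} (hs : 0 ≤ s) (hst : s ≤ t) :
    sqd (φ t) q - sqd (φ s) q = ∫ τ in s..t, pairV F q (φ τ) := by
  rw [eq_comm]
  apply intervalIntegral.integral_eq_sub_of_hasDerivAt
  · intro τ hτ
    rw [uIcc_of_le hst] at hτ
    exact Vfun_hasDerivAt hφ q (le_trans hs hτ.1)
  · apply ContinuousOn.intervalIntegrable
    rw [uIcc_of_le hst]
    exact pairV_continuousOn hF hφ q hs

include hF hlin hcc hφ in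
/-- Monotonicity of the Lyapunov function. -/
lemma Vfun_mono {q : En n × En m} (hq : IsSaddlePoint F q) {s t : ℝ} (hs : 0 ≤ s) (hst : s ≤ t) :
    sqd (φ t) q ≤ sqd (φ s) q := by
  have hdiff := Vfun_diff hF hφ q hs hst
  have huicc : uIcc s t = Icc s t := uIcc_of_le hst
  have hint : (∫ τ in s..t, pairV F q (φ τ)) ≤ ∫ τ in s..t, (0:ℝ) := by
    apply intervalIntegral.integral_mono_on hst
    · have hc := pairV_continuousOn hF hφ q hs (t := t)
      rw [← huicc] at hc; exact hc.intervalIntegrable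
    · exact intervalIntegrable_const
    · intro τ hτ
      have h1 := key_ineq hF hlin hcc hq (φ τ)
      have hge := saddle_global_min hcc hq (φ τ).1
      linarith
  simp only [intervalIntegral.integral_zero] at hint
  linarith

include hF hlin hcc hφ in
lemma dist_mono {q : En n × En m} (hq : IsSaddlePoint F q) {s t : ℝ} (hs : 0 ≤ s) (hst : s ≤ t) :
    dist (φ t) q ^ 2 ≤ 2 * dist (φ s) q ^ 2 := by
  calc dist (φ t) q ^ 2 ≤ sqd (φ t) q := dist_sq_le_sqd _ _
    _ ≤ sqd (φ s) q := Vfun_mono hF hlin hcc hφ hq hs hst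
    _ ≤ 2 * dist (φ s) q ^ 2 := sqd_le_two_dist_sq _ _

include hF hlin hcc hφ in
/-- Integral bound on the "gap" function. -/
lemma gap_integral_bound {q : En n × En m} (hq : IsSaddlePoint F q) {T : ℝ} (hT : 0 ≤ T) :
    (∫ τ in (0:ℝ)..T, (F ((φ τ).1, q.2) - F q)) ≤ sqd (φ 0) q / 2 := by
  have hdiff := Vfun_diff hF hφ q le_rfl hT
  have hcg : ContinuousOn (fun τ => -2 * (F ((φ τ).1, q.2) - F q)) (Icc 0 T) := by
    have hcφ := traj_continuousOn hφ (t := T) le_rfl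
    have h1 : ContinuousOn (fun τ => ((φ τ).1, q.2)) (Icc 0 T) :=
      ((continuous_fst).comp_continuousOn hcφ).prodMk continuousOn_const
    exact continuousOn_const.mul (((hF.continuous).comp_continuousOn h1).sub continuousOn_const)
  have hint : (∫ τ in (0:ℝ)..T, pairV F q (φ τ))
      ≤ ∫ τ in (0:ℝ)..T, -2 * (F ((φ τ).1, q.2) - F q) := by
    apply intervalIntegral.integral_mono_on hT
    · have hc := pairV_continuousOn hF hφ q le_rfl (t := T)
      rw [← uIcc_of_le hT] at hc; exact hc.intervalIntegrable
    · rw [← uIcc_of_le hT] at hcg; exact hcg.intervalIntegrable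
    · intro τ _; exact key_ineq hF hlin hcc hq (φ τ)
  rw [intervalIntegral.integral_const_mul] at hint
  have hV0 : 0 ≤ sqd (φ T) q := sqd_nonneg _ _
  linarith

end Traj

/-- Barbalat-type lemma: a nonneg Lipschitz function with bounded primitive tends to 0. -/
lemma barbalat {f : ℝ → ℝ} {M C : ℝ} (hM : 0 < M)
    (hnn : ∀ t, 0 ≤ t → 0 ≤ f t)
    (hlip : ∀ s t, 0 ≤ s → s ≤ t → |f t - f s| ≤ M * (t - s))
    (hint : ∀ T, 0 ≤ T → (∫ τ in (0:ℝ)..T, f τ) ≤ C) :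
    Tendsto f atTop (𝓝 0) := by
  -- integrability on nonneg intervals
  have hcont : ContinuousOn f (Ici 0) := by
    apply LipschitzOnWith.continuousOn (K := ⟨M, hM.le⟩)
    apply LipschitzOnWith.of_dist_le_mul
    intro x hx y hy
    simp only [Real.dist_eq]
    rcases le_total x y with h | h
    · have := hlip x y hx h
      rw [abs_sub_comm (f x), abs_sub_comm x, abs_of_nonneg (by linarith : (0:ℝ) ≤ y - x)]
      exact this
    · have := hlip y x hy h
      rw [abs_of_nonneg (by linarith : (0:ℝ) ≤ x - y)]
      exact this
  have hii : ∀ a b : ℝ, 0 ≤ a → a ≤ b → IntervalIntegrable f MeasureTheory.volume a b := by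
    intro a b ha hab
    apply ContinuousOn.intervalIntegrable
    apply hcont.mono
    rw [uIcc_of_le hab]
    exact fun τ hτ => le_trans ha hτ.1
  by_contra hnot
  rw [Metric.tendsto_atTop] at hnot
  push_neg at hnot
  obtain ⟨ε, hε, hfreq⟩ := hnot
  set d : ℝ := ε / (2 * M) with hd
  have hdpos : 0 < d := by positivity
  set b : ℝ := ε * d / 2 with hb
  have hbpos : 0 < b := by positivity
  have claim : ∀ N : ℕ, ∃ T, 0 ≤ T ∧ (N : ℝ) * b ≤ ∫ τ in (0:ℝ)..T, f τ := by
    intro N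
    induction N with
    | zero => exact ⟨0, le_rfl, by simp⟩
    | succ k ih =>
      obtain ⟨T, hT0, hTi⟩ := ih
      obtain ⟨t, ht, hft⟩ := hfreq T
      have ht0 : 0 ≤ t := le_trans hT0 ht
      have hftε : ε ≤ f t := by
        rw [Real.dist_eq, sub_zero, abs_of_nonneg (hnn t ht0)] at hft
        exact hft
      refine ⟨t + d, by linarith, ?_⟩
      have hsplit : (∫ τ in (0:ℝ)..(t + d), f τ)
          = (∫ τ in (0:ℝ)..T, f τ) + ∫ τ in T..(t + d), f τ := by
        rw [intervalIntegral.integral_add_adjacent_intervals (hii 0 T le_rfl hT0)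
          (hii T (t + d) hT0 (by linarith))]
      have hsplit2 : (∫ τ in T..(t + d), f τ)
          = (∫ τ in T..t, f τ) + ∫ τ in t..(t + d), f τ := by
        rw [intervalIntegral.integral_add_adjacent_intervals (hii T t hT0 ht)
          (hii t (t + d) ht0 (by linarith))]
      have h1 : (0:ℝ) ≤ ∫ τ in T..t, f τ := by
        apply intervalIntegral.integral_nonneg ht
        intro τ hτ; exact hnn τ (le_trans hT0 hτ.1)
      have h2 : b ≤ ∫ τ in t..(t + d), f τ := by
        have hmono : (∫ τ in t..(t + d), (ε/2 : ℝ)) ≤ ∫ τ in t..(t + d), f τ := by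
          apply intervalIntegral.integral_mono_on (by linarith)
          · exact intervalIntegrable_const
          · exact hii t (t + d) ht0 (by linarith)
          · intro τ hτ
            have hlt := hlip t τ ht0 hτ.1
            have habs : f t - f τ ≤ M * (τ - t) := by
              have := abs_le.1 hlt; linarith [this.1]
            have hMd : M * (τ - t) ≤ M * d := by
              apply mul_le_mul_of_nonneg_left _ hM.le
              linarith [hτ.2]
            have hMdval : M * d = ε / 2 := by
              rw [hd]; field_simp
            linarith
        rw [intervalIntegral.integral_const, smul_eq_mul] at hmono
        have : (t + d - t) * (ε/2) = b := by rw [hb]; ring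
        linarith
      push_cast
      linarith
  obtain ⟨N, hN⟩ := exists_nat_gt (C / b)
  obtain ⟨T, hT0, hTi⟩ := claim N
  have hCb : C < N * b := by
    rw [div_lt_iff₀ hbpos] at hN; linarith
  have := hint T hT0
  linarith

lemma dist_fst_le' (p q : En n × En m) : dist p.1 q.1 ≤ dist p q := by
  rw [Prod.dist_eq]; exact le_max_left _ _

lemma dist_snd_le' (p q : En n × En m) : dist p.2 q.2 ≤ dist p q := by
  rw [Prod.dist_eq]; exact le_max_right _ _

section Traj2
variable {F : En n × En m → ℝ} (hF : ContDiff ℝ 1 F)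
  (hlin : ∀ x : En n, ∃ (L : En m →L[ℝ] ℝ) (c : ℝ), ∀ z : En m, F (x, z) = L z + c)
  (hcc : ∀ q : En n × En m, ConvexOn ℝ univ (fun x => F (x, q.2)) ∧
      ConcaveOn ℝ univ (fun z => F (q.1, z)))
  {φ : ℝ → En n × En m} (hφ : IsTrajectory F φ)
  {q : En n × En m} (hq : IsSaddlePoint F q)

include hF hlin hcc hφ hq in
lemma traj_bounded {t : ℝ} (ht : 0 ≤ t) :
    φ t ∈ closedBall q (Real.sqrt (sqd (φ 0) q)) := by
  rw [mem_closedBall]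
  have h1 : dist (φ t) q ^ 2 ≤ sqd (φ t) q := dist_sq_le_sqd _ _
  have h2 : sqd (φ t) q ≤ sqd (φ 0) q := Vfun_mono hF hlin hcc hφ hq le_rfl ht
  calc dist (φ t) q = Real.sqrt (dist (φ t) q ^ 2) := by
        rw [Real.sqrt_sq dist_nonneg]
    _ ≤ Real.sqrt (sqd (φ 0) q) := Real.sqrt_le_sqrt (by linarith)

include hF hlin hcc hφ hq in
/-- The gap function tends to zero. -/
lemma gap_tendsto_zero :
    Tendsto (fun t => F ((φ t).1, q.2) - F q) atTop (𝓝 0) := by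
  set R := Real.sqrt (sqd (φ 0) q) with hR
  -- bounds on gradients over the compact ball
  obtain ⟨K0, hK0⟩ := (isCompact_closedBall q R).exists_bound_of_continuousOn
    ((gradX_continuous hF).continuousOn (s := closedBall q R))
  obtain ⟨K1, hK1⟩ := (isCompact_closedBall q.1 R).exists_bound_of_continuousOn
    ((gradX_continuous hF).comp_continuousOn
      ((continuous_id.prodMk continuous_const).continuousOn (s := closedBall q.1 R)))
  have hK0' : 0 ≤ K0 := le_trans (norm_nonneg _) (hK0 q (mem_closedBall_self (Real.sqrt_nonneg _)))
  have hK1' : 0 ≤ K1 := le_trans (norm_nonneg _) (hK1 q.1 (mem_closedBall_self (Real.sqrt_nonneg _)))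
  set M : ℝ := K0 * K1 + 1 with hM
  have hMpos : 0 < M := by positivity
  apply barbalat (M := M) (C := sqd (φ 0) q / 2) hMpos
  · intro t ht
    have := saddle_global_min hcc hq (φ t).1
    linarith
  · -- Lipschitz bound via FTC
    intro s t hs hst
    have hder : ∀ τ ∈ uIcc s t, HasDerivAt (fun u => F ((φ u).1, q.2) - F q)
        ((inner ℝ (gradX F ((φ τ).1, q.2)) (-gradX F (φ τ)) : ℝ)) τ := by
      intro τ hτ
      rw [uIcc_of_le hst] at hτ
      have hτ0 : 0 ≤ τ := le_trans hs hτ.1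
      exact (sliceX_hasDerivAlong F hF (traj_x_hasDerivAt hφ hτ0) q.2).sub_const (F q)
    have hcφ : ContinuousOn φ (Icc s t) := traj_continuousOn hφ hs
    have hcont : ContinuousOn
        (fun τ => (inner ℝ (gradX F ((φ τ).1, q.2)) (-gradX F (φ τ)) : ℝ)) (Icc s t) := by
      have h1 : ContinuousOn (fun τ => ((φ τ).1, q.2)) (Icc s t) :=
        (continuous_fst.comp_continuousOn hcφ).prodMk continuousOn_const
      exact ((gradX_continuous hF).comp_continuousOn h1).inner
        (((gradX_continuous hF).comp_continuousOn hcφ).neg)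
    have hint := intervalIntegral.integral_eq_sub_of_hasDerivAt hder
      (by apply ContinuousOn.intervalIntegrable; rwa [uIcc_of_le hst])
    have hbound : ∀ τ ∈ Set.uIoc s t,
        ‖(inner ℝ (gradX F ((φ τ).1, q.2)) (-gradX F (φ τ)) : ℝ)‖ ≤ M := by
      intro τ hτ
      rw [uIoc_of_le hst] at hτ
      have hτ0 : 0 ≤ τ := le_trans hs hτ.1.le
      have hmem : φ τ ∈ closedBall q R := traj_bounded hF hlin hcc hφ hq hτ0
      have hmem1 : (φ τ).1 ∈ closedBall q.1 R := by
        rw [mem_closedBall] at *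
        exact le_trans (dist_fst_le' _ _) hmem
      calc ‖(inner ℝ (gradX F ((φ τ).1, q.2)) (-gradX F (φ τ)) : ℝ)‖
          ≤ ‖gradX F ((φ τ).1, q.2)‖ * ‖-gradX F (φ τ)‖ := norm_inner_le_norm _ _
        _ ≤ K1 * K0 := by
            rw [norm_neg]
            exact mul_le_mul (by simpa using hK1 (φ τ).1 hmem1) (hK0 (φ τ) hmem)
              (norm_nonneg _) hK1'
        _ ≤ M := by rw [hM]; nlinarith
    have hnorm := intervalIntegral.norm_integral_le_of_norm_le_const hbound
    rw [hint] at hnorm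
    have habs : |t - s| = t - s := abs_of_nonneg (by linarith)
    rw [habs] at hnorm
    calc |(F ((φ t).1, q.2) - F q) - (F ((φ s).1, q.2) - F q)|
        = ‖(F ((φ t).1, q.2) - F q) - (F ((φ s).1, q.2) - F q)‖ := rfl
      _ ≤ M * (t - s) := hnorm
  · intro T hT
    exact gap_integral_bound hF hlin hcc hφ hq hT

end Traj2

/-- limit points of a trajectory along times tending to infinity. -/
def LimPt (φ : ℝ → En n × En m) (p : En n × En m) : Prop :=
  ∃ v : ℕ → ℝ, Tendsto v atTop atTop ∧ (∀ k, 0 ≤ v k) ∧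
    Tendsto (fun k => φ (v k)) atTop (𝓝 p)

section Traj3
variable {F : En n × En m → ℝ} (hF : ContDiff ℝ 1 F)
  (hlin : ∀ x : En n, ∃ (L : En m →L[ℝ] ℝ) (c : ℝ), ∀ z : En m, F (x, z) = L z + c)
  (hcc : ∀ q : En n × En m, ConvexOn ℝ univ (fun x => F (x, q.2)) ∧
      ConcaveOn ℝ univ (fun z => F (q.1, z)))
  {φ : ℝ → En n × En m} (hφ : IsTrajectory F φ)
  {q : En n × En m} (hq : IsSaddlePoint F q)
  (hiso : ∀ p : En n × En m, IsSaddlePoint F p → ∀ x : En n,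
    F (x, p.2) = F p → IsSaddlePoint F (x, p.2))

include hF hlin hcc hφ hq in
/-- extraction of limit points along subsequences of given times. -/
lemma exists_limpt_of_times (u : ℕ → ℝ) (hu0 : ∀ k, 0 ≤ u k)
    (huT : Tendsto u atTop atTop) :
    ∃ p : En n × En m, (∃ σ : ℕ → ℕ, StrictMono σ ∧
      Tendsto (fun k => φ (u (σ k))) atTop (𝓝 p)) ∧ LimPt φ p := by
  set R := Real.sqrt (sqd (φ 0) q) with hR
  have hmem : ∀ k, φ (u k) ∈ closedBall q R := fun k =>
    traj_bounded hF hlin hcc hφ hq (hu0 k)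
  obtain ⟨p, _, σ, hσ, hconv⟩ := (isCompact_closedBall q R).tendsto_subseq hmem
  refine ⟨p, ⟨σ, hσ, hconv⟩, ⟨u ∘ σ, huT.comp hσ.tendsto_atTop, fun k => hu0 _, hconv⟩⟩

include hF hlin hcc hφ hq in
lemma exists_limpt : ∃ p : En n × En m, LimPt φ p := by
  obtain ⟨p, _, hp⟩ := exists_limpt_of_times hF hlin hcc hφ hq (fun k => (k : ℝ))
    (fun k => Nat.cast_nonneg k) tendsto_natCast_atTop_atTop
  exact ⟨p, hp⟩

include hF hlin hcc hφ hq hiso in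
/-- Every limit point pairs with q.2 to give a saddle point. -/
lemma limpt_pair_saddle {p : En n × En m} (hp : LimPt φ p) :
    IsSaddlePoint F (p.1, q.2) := by
  obtain ⟨v, hvT, hv0, hvconv⟩ := hp
  have hgap := gap_tendsto_zero hF hlin hcc hφ hq
  have h1 : Tendsto (fun k => F ((φ (v k)).1, q.2) - F q) atTop (𝓝 0) :=
    hgap.comp hvT
  have h2 : Tendsto (fun k => F ((φ (v k)).1, q.2) - F q) atTop (𝓝 (F (p.1, q.2) - F q)) := by
    apply Tendsto.sub_const
    have hc : ContinuousAt (fun w : En n × En m => F (w.1, q.2)) p :=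
      (hF.continuous.comp (continuous_fst.prodMk continuous_const)).continuousAt
    exact hc.tendsto.comp hvconv
  have := tendsto_nhds_unique h2 h1
  have heq : F (p.1, q.2) = F q := by linarith [sub_eq_zero.1 this]
  exact hiso q hq p.1 heq

include hF hlin hcc hφ in
/-- The Lyapunov limit and its value at limit points. -/
lemma Vfun_limit {q' : En n × En m} (hq' : IsSaddlePoint F q') :
    ∃ r : ℝ, Tendsto (fun t => sqd (φ t) q') atTop (𝓝 r) ∧
      ∀ p, LimPt φ p → sqd p q' = r := by
  set D : ℝ → ℝ := fun t => sqd (φ (max t 0)) q' with hD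
  have hanti : Antitone D := by
    intro s t hst
    exact Vfun_mono hF hlin hcc hφ hq' (le_max_right s 0)
      (max_le_max hst le_rfl)
  have hbdd : BddBelow (range D) := by
    refine ⟨0, ?_⟩
    rintro x ⟨t, rfl⟩
    exact sqd_nonneg _ _
  have hlim := tendsto_atTop_ciInf hanti hbdd
  set r := ⨅ t, D t with hr
  have hDlim : Tendsto (fun t => sqd (φ t) q') atTop (𝓝 r) := by
    apply hlim.congr'
    filter_upwards [eventually_ge_atTop (0:ℝ)] with t ht
    rw [hD]; simp [max_eq_left ht]
  refine ⟨r, hDlim, ?_⟩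
  intro p hp
  obtain ⟨v, hvT, hv0, hvconv⟩ := hp
  have h1 : Tendsto (fun k => sqd (φ (v k)) q') atTop (𝓝 r) := hDlim.comp hvT
  have hsqc : Continuous (fun w : En n × En m => sqd w q') := by
    apply Continuous.add
    · exact ((continuous_fst.sub continuous_const).norm).pow 2
    · exact ((continuous_snd.sub continuous_const).norm).pow 2
  have h2 : Tendsto (fun k => sqd (φ (v k)) q') atTop (𝓝 (sqd p q')) :=
    hsqc.continuousAt.tendsto.comp hvconv
  exact tendsto_nhds_unique h2 h1

include hF hlin hcc hφ hq hiso in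
/-- all limit points have the same first component. -/
lemma limpt_fst_unique {p1 p2 : En n × En m} (hp1 : LimPt φ p1) (hp2 : LimPt φ p2) :
    p1.1 = p2.1 := by
  have hs1 := limpt_pair_saddle hF hlin hcc hφ hq hiso hp1
  have hs2 := limpt_pair_saddle hF hlin hcc hφ hq hiso hp2
  obtain ⟨r1, _, hval1⟩ := Vfun_limit hF hlin hcc hφ hs1
  obtain ⟨r2, _, hval2⟩ := Vfun_limit hF hlin hcc hφ hs2
  have e11 := hval1 p1 hp1
  have e21 := hval1 p2 hp2
  have e12 := hval2 p1 hp1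
  have e22 := hval2 p2 hp2
  rw [sqd] at e11 e21 e12 e22
  simp only at e11 e21 e12 e22
  have z1 : ‖p1.1 - p1.1‖ = 0 := by simp
  have z2 : ‖p2.1 - p2.1‖ = 0 := by simp
  have hsymm : ‖p1.1 - p2.1‖ ^ 2 = ‖p2.1 - p1.1‖ ^ 2 := by rw [norm_sub_rev]
  rw [z1] at e11
  rw [z2] at e22
  have hnx : ‖p1.1 - p2.1‖ ^ 2 = 0 := by nlinarith [sq_nonneg ‖p1.1 - p2.1‖]
  have hn0 : ‖p1.1 - p2.1‖ = 0 := by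
    have := sq_nonneg ‖p1.1 - p2.1‖
    nlinarith [norm_nonneg (p1.1 - p2.1)]
  rwa [norm_eq_zero, sub_eq_zero] at hn0

include hF hlin hcc hφ hq hiso in
/-- The x-component of the trajectory converges. -/
lemma x_tendsto {p : En n × En m} (hp : LimPt φ p) :
    Tendsto (fun t => (φ t).1) atTop (𝓝 p.1) := by
  by_contra hnot
  rw [Metric.tendsto_atTop] at hnot
  push_neg at hnot
  obtain ⟨ε, hε, hfreq⟩ := hnot
  have hchoice : ∀ k : ℕ, ∃ t : ℝ, t ≥ (k : ℝ) ∧ ε ≤ dist ((φ t).1) p.1 := fun k => hfreq (k : ℝ)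
  choose u hu1 hu2 using hchoice
  have hu0 : ∀ k, 0 ≤ u k := fun k => le_trans (Nat.cast_nonneg k) (hu1 k)
  have huT : Tendsto u atTop atTop :=
    tendsto_atTop_mono hu1 tendsto_natCast_atTop_atTop
  obtain ⟨p', ⟨σ, hσ, hconv⟩, hp'⟩ := exists_limpt_of_times hF hlin hcc hφ hq u hu0 huT
  have heq : p'.1 = p.1 := limpt_fst_unique hF hlin hcc hφ hq hiso hp' hp
  have hdist : Tendsto (fun k => dist ((φ (u (σ k))).1) p.1) atTop (𝓝 (dist p'.1 p.1)) := by
    exact ((continuous_fst.dist continuous_const).continuousAt.tendsto.comp hconv)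
  have hge : ε ≤ dist p'.1 p.1 :=
    le_of_tendsto_of_tendsto tendsto_const_nhds hdist
      (Filter.Eventually.of_forall (fun k => hu2 (σ k)))
  rw [heq, dist_self] at hge
  linarith

end Traj3

section Traj4
variable {F : En n × En m → ℝ} (hF : ContDiff ℝ 1 F)
  (hlin : ∀ x : En n, ∃ (L : En m →L[ℝ] ℝ) (c : ℝ), ∀ z : En m, F (x, z) = L z + c)
  (hcc : ∀ q : En n × En m, ConvexOn ℝ univ (fun x => F (x, q.2)) ∧
      ConcaveOn ℝ univ (fun z => F (q.1, z)))
  {φ : ℝ → En n × En m} (hφ : IsTrajectory F φ)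
  {q : En n × En m} (hq : IsSaddlePoint F q)
  (hiso : ∀ p : En n × En m, IsSaddlePoint F p → ∀ x : En n,
    F (x, p.2) = F p → IsSaddlePoint F (x, p.2))

include hF hlin hcc hφ hq hiso in
/-- The z-gradient along the trajectory tends to 0. -/
lemma gradZ_tendsto_zero {p : En n × En m} (hp : LimPt φ p) :
    Tendsto (fun t => gradZ F (φ t)) atTop (𝓝 0) := by
  have hx := x_tendsto hF hlin hcc hφ hq hiso hp
  have hsad := limpt_pair_saddle hF hlin hcc hφ hq hiso hp
  have hzero : gradZ F (p.1, q.2) = 0 := saddle_gradZ_zero hlin hsad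
  have hind : ∀ t, gradZ F (φ t) = gradZ F ((φ t).1, q.2) := by
    intro t
    have := gradZ_indep hlin (φ t).1 (φ t).2 q.2
    rw [← this, Prod.mk.eta]
  have hcont : Continuous (fun x : En n => gradZ F (x, q.2)) :=
    (gradZ_continuous hF).comp (continuous_id.prodMk continuous_const)
  have : Tendsto (fun t => gradZ F ((φ t).1, q.2)) atTop (𝓝 (gradZ F (p.1, q.2))) :=
    hcont.continuousAt.tendsto.comp hx
  rw [hzero] at this
  exact this.congr (fun t => (hind t).symm)

include hF hlin hcc hφ hq hiso in
/-- Case A : if the x-gradient vanishes at a limit point, the trajectory converges to it. -/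
lemma caseA {p : En n × En m} (hp : LimPt φ p) (hgx : gradX F p = 0) :
    IsSaddlePoint F p ∧ Tendsto φ atTop (𝓝 p) := by
  have hsad1 := limpt_pair_saddle hF hlin hcc hφ hq hiso hp
  have hgz : gradZ F p = 0 := by
    have h1 := gradZ_indep hlin p.1 p.2 q.2
    rw [show ((p.1 : En n), (p.2 : En m)) = p from Prod.mk.eta] at h1
    rw [h1]
    exact saddle_gradZ_zero hlin hsad1
  have hpsad : IsSaddlePoint F p := critical_is_saddle hlin hcc hF hgx hgz
  refine ⟨hpsad, ?_⟩
  obtain ⟨r, hlim, hval⟩ := Vfun_limit hF hlin hcc hφ hpsad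
  have hr0 : r = 0 := by
    have := hval p hp
    rw [sqd] at this
    simp at this
    linarith [this]
  rw [hr0] at hlim
  -- dist (φ t) p → 0
  have hdist : Tendsto (fun t => dist (φ t) p) atTop (𝓝 0) := by
    apply squeeze_zero (fun t => dist_nonneg)
      (g := fun t => Real.sqrt (sqd (φ t) p))
    · intro t
      calc dist (φ t) p = Real.sqrt (dist (φ t) p ^ 2) := by rw [Real.sqrt_sq dist_nonneg]
        _ ≤ Real.sqrt (sqd (φ t) p) := Real.sqrt_le_sqrt (dist_sq_le_sqd _ _)
    · have : Tendsto Real.sqrt (𝓝 0) (𝓝 0) := by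
        simpa using (Real.continuous_sqrt.tendsto 0)
      exact this.comp hlim
  exact tendsto_iff_dist_tendsto_zero.2 hdist

include hF hlin hcc hφ hq hiso in
/-- Case B is impossible: at some limit point the x-gradient must vanish. -/
lemma caseB {p : En n × En m} (hp : LimPt φ p) (hgx : gradX F p ≠ 0) : False := by
  obtain ⟨v, hvT, hv0, hvconv⟩ := hp
  set G := gradX F p with hG
  set a := ‖G‖ with ha
  have hapos : 0 < a := norm_pos_iff.2 hgx
  -- continuity of gradX at p
  have hcontX : ContinuousAt (fun w => gradX F w) p := (gradX_continuous hF).continuousAt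
  rw [Metric.continuousAt_iff] at hcontX
  obtain ⟨ρ, hρ, hball⟩ := hcontX (a/2) (by positivity)
  set η := min (ρ/3) (a/16) with hη
  have hηpos : 0 < η := lt_min (by positivity) (by positivity)
  -- eventual smallness
  have hx := x_tendsto hF hlin hcc hφ hq hiso ⟨v, hvT, hv0, hvconv⟩
  have hz := gradZ_tendsto_zero hF hlin hcc hφ hq hiso ⟨v, hvT, hv0, hvconv⟩
  rw [Metric.tendsto_atTop] at hx
  obtain ⟨T1, hT1⟩ := hx η hηpos
  have hz' := Metric.tendsto_atTop.1 hz η hηpos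
  obtain ⟨T2, hT2⟩ := hz'
  -- pick a time t₀ = v k large with φ (v k) close to p
  have hvconv' := Metric.tendsto_atTop.1 hvconv η hηpos
  obtain ⟨K1, hK1⟩ := hvconv'
  obtain ⟨K2, hK2⟩ := Filter.eventually_atTop.1 (hvT.eventually_ge_atTop (max (max T1 T2) 0))
  set k := max K1 K2 with hk
  set t₀ := v k with ht₀
  have hk1 : dist (φ t₀) p < η := hK1 k (le_max_left _ _)
  have ht₀T : max (max T1 T2) 0 ≤ t₀ := hK2 k (le_max_right _ _)
  have ht₀0 : 0 ≤ t₀ := le_trans (le_max_right _ _) ht₀T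
  have ht₀T1 : T1 ≤ t₀ := le_trans (le_trans (le_max_left _ _) (le_max_left _ _)) ht₀T
  have ht₀T2 : T2 ≤ t₀ := le_trans (le_trans (le_max_right _ _) (le_max_left _ _)) ht₀T
  -- on [t₀, t₀+1], φ stays ρ-close to p
  have hclose : ∀ s ∈ Icc t₀ (t₀ + 1), dist (φ s) p < ρ := by
    intro s hs
    have hs0 : 0 ≤ s := le_trans ht₀0 hs.1
    -- x-component
    have hxc : dist ((φ s).1) p.1 < η := hT1 s (le_trans ht₀T1 hs.1)
    -- z-component via integral
    have hzder : ∀ τ ∈ uIcc t₀ s, HasDerivAt (fun u => (φ u).2) (gradZ F (φ τ)) τ := by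
      intro τ hτ
      rw [uIcc_of_le hs.1] at hτ
      exact traj_z_hasDerivAt hφ (le_trans ht₀0 hτ.1)
    have hzcont : ContinuousOn (fun τ => gradZ F (φ τ)) (Icc t₀ s) :=
      (gradZ_continuous hF).comp_continuousOn (traj_continuousOn hφ ht₀0)
    have hftc := intervalIntegral.integral_eq_sub_of_hasDerivAt hzder
      (by apply ContinuousOn.intervalIntegrable; rwa [uIcc_of_le hs.1])
    have hbound : ∀ τ ∈ Set.uIoc t₀ s, ‖gradZ F (φ τ)‖ ≤ η := by
      intro τ hτ
      rw [uIoc_of_le hs.1] at hτ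
      have : dist (gradZ F (φ τ)) 0 < η := hT2 τ (le_trans ht₀T2 hτ.1.le)
      rw [dist_zero_right] at this
      exact this.le
    have hnorm := intervalIntegral.norm_integral_le_of_norm_le_const hbound
    rw [hftc] at hnorm
    have habs : |s - t₀| ≤ 1 := by
      rw [abs_of_nonneg (by linarith [hs.1])]
      linarith [hs.2]
    have hzdiff : ‖(φ s).2 - (φ t₀).2‖ ≤ η := by
      calc ‖(φ s).2 - (φ t₀).2‖ ≤ η * |s - t₀| := hnorm
        _ ≤ η * 1 := by nlinarith [hηpos.le]
        _ = η := mul_one η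
    have hzc : dist ((φ s).2) p.2 ≤ 2 * η := by
      calc dist ((φ s).2) p.2 ≤ dist ((φ s).2) ((φ t₀).2) + dist ((φ t₀).2) p.2 :=
            dist_triangle _ _ _
        _ ≤ η + η := by
            apply add_le_add
            · rw [dist_eq_norm]; exact hzdiff
            · exact le_trans (dist_snd_le' _ _) hk1.le
        _ = 2 * η := by ring
    rw [Prod.dist_eq]
    have hη3 : 2 * η < ρ := by
      have := min_le_left (ρ/3) (a/16)
      rw [← hη] at this
      linarith
    apply max_lt
    · calc dist ((φ s).1) p.1 < η := hxc
        _ < ρ := by linarith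
    · linarith [hzc]
  -- gradient alignment on the interval
  have halign : ∀ s ∈ Icc t₀ (t₀ + 1), a ^ 2 / 2 ≤ (inner ℝ G (gradX F (φ s)) : ℝ) := by
    intro s hs
    have := hball (hclose s hs)
    rw [dist_eq_norm] at this
    have hcs : |(inner ℝ G (gradX F (φ s) - G) : ℝ)| ≤ ‖G‖ * ‖gradX F (φ s) - G‖ :=
      abs_real_inner_le_norm _ _
    have hexp : (inner ℝ G (gradX F (φ s)) : ℝ)
        = ‖G‖ ^ 2 + (inner ℝ G (gradX F (φ s) - G) : ℝ) := by
      rw [inner_sub_right, real_inner_self_eq_norm_sq]; ring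
    have h1 : ‖G‖ * ‖gradX F (φ s) - G‖ ≤ a * (a/2) := by
      apply mul_le_mul_of_nonneg_left _ (norm_nonneg G) |>.trans
      · exact le_rfl
      · exact this.le
    rw [hexp]
    have := abs_le.1 hcs
    nlinarith [this.1]
  -- FTC for the x-component
  have hxder : ∀ τ ∈ uIcc t₀ (t₀ + 1), HasDerivAt (fun u => (φ u).1) (-gradX F (φ τ)) τ := by
    intro τ hτ
    rw [uIcc_of_le (by linarith : t₀ ≤ t₀ + 1)] at hτ
    exact traj_x_hasDerivAt hφ (le_trans ht₀0 hτ.1)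
  have hxcont : ContinuousOn (fun τ => -gradX F (φ τ)) (Icc t₀ (t₀ + 1)) :=
    ((gradX_continuous hF).comp_continuousOn (traj_continuousOn hφ ht₀0)).neg
  have hxftc := intervalIntegral.integral_eq_sub_of_hasDerivAt hxder
    (by apply ContinuousOn.intervalIntegrable
        rwa [uIcc_of_le (by linarith : t₀ ≤ t₀ + 1)])
  -- inner product with G of the integral
  have hii : IntervalIntegrable (fun τ => -gradX F (φ τ)) MeasureTheory.volume t₀ (t₀ + 1) := by
    apply ContinuousOn.intervalIntegrable
    rwa [uIcc_of_le (by linarith : t₀ ≤ t₀ + 1)]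
  have hswap := (innerSL ℝ G).intervalIntegral_comp_comm hii
  have hint2 : (∫ τ in t₀..(t₀ + 1), (innerSL ℝ G) (-gradX F (φ τ))) ≤ -(a ^ 2 / 2) := by
    have hmono : (∫ τ in t₀..(t₀ + 1), (innerSL ℝ G) (-gradX F (φ τ)))
        ≤ ∫ _τ in t₀..(t₀ + 1), -(a ^ 2 / 2) := by
      apply intervalIntegral.integral_mono_on (by linarith)
      · apply ContinuousOn.intervalIntegrable
        rw [uIcc_of_le (by linarith : t₀ ≤ t₀ + 1)]
        exact (continuousOn_const.inner hxcont)
      · exact intervalIntegrable_const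
      · intro τ hτ
        have := halign τ hτ
        simp only [innerSL_apply_apply, inner_neg_right]
        linarith
    rwa [intervalIntegral.integral_const, smul_eq_mul,
      show (t₀ + 1 - t₀ : ℝ) = 1 by ring, one_mul] at hmono
  rw [hswap, hxftc] at hint2
  -- but the x-component barely moves
  have hmove : ‖(φ (t₀ + 1)).1 - (φ t₀).1‖ < 2 * η := by
    have h1 : dist ((φ (t₀ + 1)).1) p.1 < η := hT1 (t₀ + 1) (by linarith)
    have h2 : dist ((φ t₀).1) p.1 < η := hT1 t₀ ht₀T1
    calc ‖(φ (t₀ + 1)).1 - (φ t₀).1‖ = dist ((φ (t₀ + 1)).1) ((φ t₀).1) := (dist_eq_norm _ _).symm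
      _ ≤ dist ((φ (t₀ + 1)).1) p.1 + dist p.1 ((φ t₀).1) := dist_triangle _ _ _
      _ < η + η := by rw [dist_comm p.1]; linarith
      _ = 2 * η := by ring
  have hcs : |(innerSL ℝ G) ((φ (t₀ + 1)).1 - (φ t₀).1)| ≤ a * ‖(φ (t₀ + 1)).1 - (φ t₀).1‖ := by
    simpa [innerSL_apply_apply, ha] using abs_real_inner_le_norm G ((φ (t₀ + 1)).1 - (φ t₀).1)
  have hη16 : 2 * η ≤ a / 8 := by
    have := min_le_right (ρ/3) (a/16)
    rw [← hη] at this
    linarith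
  have habs := abs_le.1 hcs
  nlinarith [habs.1, habs.2, hmove, hapos, hη16, norm_nonneg ((φ (t₀ + 1)).1 - (φ t₀).1)]

end Traj4


/-- Corollary: global asymptotic stability via convexity-linearity.
If `F` is `C¹`, globally convex-concave, affine in `z`, and for every saddle point `(x*,z*)`
the equality `F(x,z*) = F(x*,z*)` forces `(x,z*)` to be a saddle point, then the (nonempty)
saddle set is globally asymptotically stable and every trajectory converges to a single
saddle point. -/
theorem stmt_3 {n m : ℕ} (F : En n × En m → ℝ) (hF : ContDiff ℝ 1 F)
    (hne : (SaddleSet F).Nonempty)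
    (hcc : ∀ q : En n × En m,
      ConvexOn ℝ univ (fun x => F (x, q.2)) ∧ ConcaveOn ℝ univ (fun z => F (q.1, z)))
    (hlin : ∀ x : En n, ∃ (L : En m →L[ℝ] ℝ) (c : ℝ), ∀ z : En m, F (x, z) = L z + c)
    (hiso : ∀ p ∈ SaddleSet F, ∀ x : En n, F (x, p.2) = F p → (x, p.2) ∈ SaddleSet F) :
    (∀ p ∈ SaddleSet F, StablePt F p) ∧
    (∀ φ : ℝ → En n × En m, IsTrajectory F φ →
      ∃ q ∈ SaddleSet F, Tendsto φ atTop (𝓝 q)) := by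
  have hiso' : ∀ p : En n × En m, IsSaddlePoint F p → ∀ x : En n,
      F (x, p.2) = F p → IsSaddlePoint F (x, p.2) := fun p hp x heq => hiso p hp x heq
  obtain ⟨q, hq⟩ := hne
  constructor
  · intro p hp ε hε
    refine ⟨ε / 2, by positivity, ?_⟩
    intro φ hφ h0 t ht
    have hmono := dist_mono hF hlin hcc hφ hp le_rfl ht
    by_contra hcon
    push_neg at hcon
    nlinarith [dist_nonneg (x := φ 0) (y := p), dist_nonneg (x := φ t) (y := p)]
  · intro φ hφ
    obtain ⟨p, hp⟩ := exists_limpt hF hlin hcc hφ hq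
    by_cases hgx : gradX F p = 0
    · obtain ⟨hpsad, htend⟩ := caseA hF hlin hcc hφ hq hiso' hp hgx
      exact ⟨p, hpsad, htend⟩
    · exact (caseB hF hlin hcc hφ hq hiso' hp hgx).elim
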